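/- Let K be a commutative ring, P a finite poset, U ⊆ P a sieve (downward-closed subset) with inclusion u : U ↪ P, and F ∈ (K-Mod)^P. Then the unit morphism F → u_* u^* F of the adjunction (u^*, u_*) is an isomorphism if and only if F(x) = 0 for all x ∈ P \ U. -/

import Mathlib

open CategoryTheory CategoryTheory.Limits

universe u

variable (K : Type u) [CommRing K] (P : Type u) [PartialOrder P]

/-- The inclusion functor of a subposet (a subset of `P` with the induced order). -/
def inclFunctor (U : Set P) : (↥U) ⥤ P :=
  (Subtype.mono_coe (· ∈ U)).functor

instance (U : Set P) : (inclFunctor P U).Full where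
  map_surjective {x y} f := ⟨homOfLE (Subtype.coe_le_coe.mp (leOfHom f)), rfl⟩

instance (U : Set P) : (inclFunctor P U).Faithful where
  map_injective _ := Subsingleton.elim _ _

/-- The limit of a diagram over an empty category is terminal. -/
noncomputable def isTerminalLimitOfIsEmpty {J : Type*} [Category J] [IsEmpty J]
    {C : Type*} [Category C] (D : J ⥤ C) [HasLimit D] : IsTerminal (limit D) :=
  IsTerminal.ofUniqueHom
    (fun Y => limit.lift D
      { pt := Y
        π := { app := fun j => isEmptyElim j, naturality := fun j => isEmptyElim j } })
    (fun Y m => limit.hom_ext (fun j => isEmptyElim j))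

/-- Let `U ⊆ P` be a sieve (downward-closed subset) in a finite poset `P`
with inclusion `u : U ↪ P`.  For `F ∈ (K-Mod)^P`, the unit `F → u_* u^* F` of the adjunction
`(u^*, u_*)` (restriction, right Kan extension) is an isomorphism if and only if
`F(p) = 0` for all `p ∈ P \ U`. -/
theorem statement_12 [Fintype P] (U : Set P)
    (hU : ∀ ⦃a b : P⦄, a ≤ b → b ∈ U → a ∈ U) (F : P ⥤ ModuleCat.{u} K) :
    IsIso (((inclFunctor P U).ranAdjunction (ModuleCat.{u} K)).unit.app F) ↔
      ∀ p : P, p ∉ U → IsZero (F.obj p) := by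
  set L := inclFunctor P U with hL
  rw [NatTrans.isIso_iff_isIso_app]
  have hzero : ∀ p : P, p ∉ U → IsZero ((L.ran.obj (L ⋙ F)).obj p) := by
    intro p hp
    have he : IsEmpty (StructuredArrow p L) :=
      ⟨fun f => hp (hU (leOfHom f.hom) f.right.2)⟩
    have ht : IsTerminal (limit (StructuredArrow.proj p L ⋙ (L ⋙ F))) :=
      isTerminalLimitOfIsEmpty _
    have hz : IsZero (limit (StructuredArrow.proj p L ⋙ (L ⋙ F))) :=
      (isZero_zero _).of_iso (HasZeroObject.zeroIsoIsTerminal ht).symm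
    exact hz.of_iso (L.ranObjObjIsoLimit (L ⋙ F) p)
  constructor
  · intro h p hp
    have := h p
    exact (hzero p hp).of_iso
      (asIso (((L.ranAdjunction (ModuleCat.{u} K)).unit.app F).app p))
  · intro h p
    by_cases hp : p ∈ U
    · have h1 := L.ranCounit_app_app_ranAdjunction_unit_app_app F ⟨p, hp⟩
      have h2 : IsIso ((((L.ranAdjunction (ModuleCat.{u} K)).unit.app F).app (L.obj ⟨p, hp⟩)) ≫
          (L.ranCounit.app (L ⋙ F)).app ⟨p, hp⟩) := by rw [h1]; infer_instance
      haveI : L.HasPointwiseRightKanExtension (L ⋙ F) := fun Y => by infer_instance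
      have hI : IsIso ((L.ranCounit.app (L ⋙ F)).app ⟨p, hp⟩) := by infer_instance
      exact @IsIso.of_isIso_comp_right _ _ _ _ _ _
        ((L.ranCounit.app (L ⋙ F)).app ⟨p, hp⟩) hI h2
    · have hzF := h p hp
      have hz := hzero p hp
      have heq : (((L.ranAdjunction (ModuleCat.{u} K)).unit.app F).app p) = (hzF.iso hz).hom :=
        hzF.eq_of_src _ _
      rw [heq]
      infer_instance
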